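/- Define C_{α,λ}(τ) = (1/(√π Γ(α)))(|τ|/(2λ))^{α-1/2} K_{α-1/2}(λ|τ|) for τ ≠ 0 and C_{α,λ}(0) = Γ(2α-1)/(Γ(α)² (2λ)^{2α-1}), with α > 1/2, λ > 0. Then the reduced covariance Ĉ(t,s) = C_{α,λ}(t-s) − C_{α,λ}(t) − C_{α,λ}(s) + C_{α,λ}(0) can be written as Ĉ(t,s) = (1/2)[c_t|t|^{2H} + c_s|s|^{2H} − c_{t−s}|t−s|^{2H}], where H = α − 1/2 and c_τ = 2Γ(2H)/(Γ(H+1/2)²(2λ|τ|)^{2H}) − (2/(√π Γ(H+1/2)))(1/(2λ|τ|))^H K_H(λ|τ|) for τ ≠ 0, c_0 = 0. -/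

import Mathlib

open Real

/-- Modified Bessel function of the second kind, via its integral representation. -/
noncomputable def besselK (ν x : ℝ) : ℝ :=
  ∫ t in Set.Ioi (0 : ℝ), Real.exp (-x * Real.cosh t) * Real.cosh (ν * t)

/-- Covariance of the Weyl fractional Ornstein-Uhlenbeck process. -/
noncomputable def fouCov (α lam τ : ℝ) : ℝ :=
  if τ = 0 then Real.Gamma (2*α - 1) / (Real.Gamma α ^ 2 * (2*lam) ^ (2*α - 1))
  else (1 / (Real.sqrt π * Real.Gamma α)) * (|τ| / (2*lam)) ^ (α - 1/2) *
    besselK (α - 1/2) (lam * |τ|)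

/-- FBM-like coefficient in the TFBM covariance. -/
noncomputable def tfbmCoeff (H lam τ : ℝ) : ℝ :=
  if τ = 0 then 0
  else 2 * Real.Gamma (2*H) / (Real.Gamma (H + 1/2) ^ 2 * (2*lam*|τ|) ^ (2*H))
    - (2 / (Real.sqrt π * Real.Gamma (H + 1/2))) * (1 / (2*lam*|τ|)) ^ H *
        besselK H (lam * |τ|)

lemma key (α lam τ : ℝ) (hα : 1/2 < α) (hlam : 0 < lam) :
    tfbmCoeff (α - 1/2) lam τ * |τ| ^ (2*(α - 1/2)) = 2 * (fouCov α lam 0 - fouCov α lam τ) := by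
  rcases eq_or_ne τ 0 with h | h
  · simp [tfbmCoeff, fouCov, h]
  · have ha : 0 < |τ| := abs_pos.mpr h
    have hL : 0 < 2 * lam := by linarith
    have hΓ : 0 < Real.Gamma α := Real.Gamma_pos_of_pos (by linarith)
    have hπ : 0 < Real.sqrt π := Real.sqrt_pos.mpr Real.pi_pos
    simp only [tfbmCoeff, fouCov, if_neg h, if_pos rfl, ↓reduceIte]
    rw [show α - 1/2 + 1/2 = α from by ring, show 2*(α - 1/2) = 2*α - 1 from by ring]
    have e1 : (2*lam*|τ|) ^ (2*α - 1) = (2*lam)^(2*α - 1) * |τ|^(2*α - 1) :=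
      Real.mul_rpow hL.le ha.le
    have e2 : |τ|^(2*α - 1) = |τ|^(α - 1/2) * |τ|^(α - 1/2) := by
      rw [← Real.rpow_add ha]; ring_nf
    have e3 : (1/(2*lam*|τ|))^(α - 1/2) = 1/((2*lam)^(α - 1/2) * |τ|^(α - 1/2)) := by
      rw [one_div, Real.inv_rpow (by positivity), Real.mul_rpow hL.le ha.le, ← one_div]
    have e4 : (|τ|/(2*lam))^(α - 1/2) = |τ|^(α - 1/2)/(2*lam)^(α - 1/2) :=
      Real.div_rpow ha.le hL.le _
    rw [e1, e3, e4, e2]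
    have h1 : ((2:ℝ)*lam)^(2*α-1) ≠ 0 := by positivity
    have h2 : ((2:ℝ)*lam)^(α-1/2) ≠ 0 := by positivity
    have h3 : |τ|^(α-1/2) ≠ 0 := by positivity
    field_simp

theorem stmt3 (α lam t s : ℝ) (hα : 1/2 < α) (hlam : 0 < lam) :
    fouCov α lam (t - s) - fouCov α lam t - fouCov α lam s + fouCov α lam 0
      = (1/2) * (tfbmCoeff (α - 1/2) lam t * |t| ^ (2*(α - 1/2))
          + tfbmCoeff (α - 1/2) lam s * |s| ^ (2*(α - 1/2))
          - tfbmCoeff (α - 1/2) lam (t - s) * |t - s| ^ (2*(α - 1/2))) := by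
  rw [key α lam t hα hlam, key α lam s hα hlam, key α lam (t-s) hα hlam]; ring
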